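/- Let n ≥ 1 be a natural number, let 0 < k₂ ≤ k₁ be real constants and L > 0, and let P be a (2n) × (2n) complex matrix. Suppose the multiset of roots (with multiplicity) of the characteristic polynomial of P admits an enumeration λ : Fin (2n) → ℂ which is an (n,k₁,k₂,L)-hyperbolic tuple. Then exp(n·k₂·L) · (1 − exp(−k₂·L))^{2n} ≤ |det(1 − P)| ≤ exp(n·k₁·L) · (1 + exp(−k₂·L))^{2n}, where 1 denotes the (2n) × (2n) identity matrix. -/

import Mathlib

/-- A tuple `lam : Fin (2*n) → ℂ` is `(n, k₁, k₂, L)`-hyperbolic if its first `n` entries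
have modulus in `[exp (k₂·L), exp (k₁·L)]` (expanding eigenvalues) and its last `n` entries
have modulus in `[exp (−k₁·L), exp (−k₂·L)]` (contracting eigenvalues). -/
def IsHyperbolicTuple (n : ℕ) (k₁ k₂ L : ℝ) (lam : Fin (2 * n) → ℂ) : Prop :=
  (∀ i : Fin (2 * n), (i : ℕ) < n →
      Real.exp (k₂ * L) ≤ ‖lam i‖ ∧ ‖lam i‖ ≤ Real.exp (k₁ * L)) ∧
  (∀ i : Fin (2 * n), n ≤ (i : ℕ) →
      Real.exp (-(k₁ * L)) ≤ ‖lam i‖ ∧ ‖lam i‖ ≤ Real.exp (-(k₂ * L)))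

theorem det_one_sub_poincare_bounds (n : ℕ) (hn : 1 ≤ n) (k₁ k₂ L : ℝ)
    (hk₂ : 0 < k₂) (hk : k₂ ≤ k₁) (hL : 0 < L)
    (P : Matrix (Fin (2 * n)) (Fin (2 * n)) ℂ)
    (hP : ∃ lam : Fin (2 * n) → ℂ,
      (Matrix.charpoly P).roots = Multiset.map lam Finset.univ.val ∧
      IsHyperbolicTuple n k₁ k₂ L lam) :
    Real.exp (n * k₂ * L) * (1 - Real.exp (-(k₂ * L))) ^ (2 * n) ≤
        ‖Matrix.det (1 - P)‖ ∧
      ‖Matrix.det (1 - P)‖ ≤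
        Real.exp (n * k₁ * L) * (1 + Real.exp (-(k₂ * L))) ^ (2 * n) := by
  obtain ⟨lam, hroots, hexp, hcon⟩ := hP
  set p := Matrix.charpoly P with hp
  have hmonic : p.Monic := Matrix.charpoly_monic P
  have hsplits : p.Splits := IsAlgClosed.splits p
  -- det (1 - P) = p.eval 1
  have hdet : Matrix.det (1 - P) = p.eval 1 := by
    rw [hp, Matrix.charpoly, eval_det, Matrix.matPolyEquiv_charmatrix]
    simp
  have heval : p.eval 1 = ∏ i : Fin (2 * n), (1 - lam i) := by
    conv_lhs => rw [Polynomial.Splits.eq_prod_roots_of_monic hsplits hmonic]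
    rw [hroots, Polynomial.eval_multiset_prod, Finset.prod_eq_multiset_prod,
      Multiset.map_map, Multiset.map_map]
    simp
  have habs : ‖Matrix.det (1 - P)‖ =
      ∏ i : Fin (2 * n), ‖1 - lam i‖ := by
    rw [hdet, heval, norm_prod]
  set b := Real.exp (-(k₂ * L)) with hbdef
  have hb0 : 0 < b := Real.exp_pos _
  have hb1 : b < 1 := by
    rw [hbdef, Real.exp_lt_one_iff]
    nlinarith
  -- switch to a product over ℕ
  set f : ℕ → ℝ := fun j => if h : j < 2 * n then ‖1 - lam ⟨j, h⟩‖ else 1 with hf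
  have hprod : ‖Matrix.det (1 - P)‖ =
      (∏ j ∈ Finset.range n, f j) * ∏ j ∈ Finset.range n, f (n + j) := by
    rw [habs, ← Finset.prod_range_add f n n]
    have h2 : 2 * n = n + n := two_mul n
    rw [show (∏ i : Fin (2*n), ‖1 - lam i‖) = ∏ i : Fin (2*n), f i by
      refine Finset.prod_congr rfl fun i _ => ?_
      rw [hf]; simp only [i.isLt, dif_pos, Fin.eta],
      Fin.prod_univ_eq_prod_range f (2*n), h2]
  have hf0 : ∀ j, 0 ≤ f j := by
    intro j
    rw [hf]; dsimp only; split
    · exact norm_nonneg _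
    · norm_num
  have htri : ∀ z : ℂ, ‖1 - z‖ ≤ 1 + ‖z‖ := by
    intro z
    have := norm_add_le (1:ℂ) (-z)
    rw [← sub_eq_add_neg, norm_neg, norm_one] at this
    exact this
  have key1 : ∀ j ∈ Finset.range n,
      Real.exp (k₂ * L) - 1 ≤ f j ∧ f j ≤ 1 + Real.exp (k₁ * L) := by
    intro j hj
    rw [Finset.mem_range] at hj
    have hlt : j < 2 * n := by omega
    have h := hexp ⟨j, hlt⟩ hj
    rw [hf]; simp only [hlt, dif_pos]
    set z := lam ⟨j, hlt⟩
    constructor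
    · calc Real.exp (k₂ * L) - 1 ≤ ‖z‖ - ‖(1:ℂ)‖ := by
            rw [norm_one]; linarith [h.1]
        _ ≤ ‖z - 1‖ := norm_sub_norm_le z 1
        _ = ‖1 - z‖ := norm_sub_rev z 1
    · exact (htri z).trans (by linarith [h.2])
  have key2 : ∀ j ∈ Finset.range n,
      1 - b ≤ f (n + j) ∧ f (n + j) ≤ 1 + b := by
    intro j hj
    rw [Finset.mem_range] at hj
    have hlt : n + j < 2 * n := by omega
    have h := hcon ⟨n + j, hlt⟩ (by simp)
    rw [hf]; simp only [hlt, dif_pos]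
    set z := lam ⟨n + j, hlt⟩
    constructor
    · calc 1 - b ≤ ‖(1:ℂ)‖ - ‖z‖ := by
            rw [norm_one]; linarith [h.2]
        _ ≤ ‖1 - z‖ := norm_sub_norm_le 1 z
    · exact (htri z).trans (by linarith [h.2])
  have hek₂ : Real.exp (k₂ * L) - 1 = Real.exp (k₂ * L) * (1 - b) := by
    rw [hbdef, mul_sub, mul_one, ← Real.exp_add]
    simp
  have hek₂pos : 0 < Real.exp (k₂ * L) - 1 := by
    rw [hek₂]
    have h1b : (0:ℝ) < 1 - b := by linarith
    positivity
  have hen₂ : Real.exp (↑n * k₂ * L) = Real.exp (k₂ * L) ^ n := by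
    rw [mul_assoc, Real.exp_nat_mul]
  have hen₁ : Real.exp (↑n * k₁ * L) = Real.exp (k₁ * L) ^ n := by
    rw [mul_assoc, Real.exp_nat_mul]
  constructor
  · -- lower bound
    rw [hprod]
    have h1 : (Real.exp (k₂ * L) - 1) ^ n ≤ ∏ j ∈ Finset.range n, f j := by
      calc (Real.exp (k₂ * L) - 1) ^ n = ∏ _j ∈ Finset.range n, (Real.exp (k₂ * L) - 1) := by
            rw [Finset.prod_const, Finset.card_range]
        _ ≤ _ := Finset.prod_le_prod (fun i _ => hek₂pos.le) (fun i hi => (key1 i hi).1)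
    have h2 : (1 - b) ^ n ≤ ∏ j ∈ Finset.range n, f (n + j) := by
      calc (1 - b) ^ n = ∏ _j ∈ Finset.range n, (1 - b) := by
            rw [Finset.prod_const, Finset.card_range]
        _ ≤ _ := Finset.prod_le_prod (fun i _ => by linarith) (fun i hi => (key2 i hi).1)
    calc Real.exp (↑n * k₂ * L) * (1 - b) ^ (2 * n)
        = (Real.exp (k₂ * L) - 1) ^ n * (1 - b) ^ n := by
          rw [hen₂, hek₂, mul_pow, two_mul, pow_add]; ring
      _ ≤ (∏ j ∈ Finset.range n, f j) * ∏ j ∈ Finset.range n, f (n + j) := by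
          apply mul_le_mul h1 h2 (pow_nonneg (by linarith) n) (le_trans (pow_nonneg hek₂pos.le n) h1)
  · -- upper bound
    rw [hprod]
    have hub : 1 + Real.exp (k₁ * L) ≤ Real.exp (k₁ * L) * (1 + b) := by
      have h1 : (1:ℝ) ≤ Real.exp (k₁ * L) * b := by
        rw [hbdef, ← Real.exp_add]
        apply Real.one_le_exp
        nlinarith
      nlinarith
    have h1 : ∏ j ∈ Finset.range n, f j ≤ (Real.exp (k₁ * L) * (1 + b)) ^ n := by
      calc (∏ j ∈ Finset.range n, f j)
          ≤ ∏ _j ∈ Finset.range n, (Real.exp (k₁ * L) * (1 + b)) :=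
            Finset.prod_le_prod (fun i _ => hf0 i) (fun i hi => ((key1 i hi).2).trans hub)
        _ = _ := by rw [Finset.prod_const, Finset.card_range]
    have h2 : ∏ j ∈ Finset.range n, f (n + j) ≤ (1 + b) ^ n := by
      calc (∏ j ∈ Finset.range n, f (n + j))
          ≤ ∏ _j ∈ Finset.range n, (1 + b) :=
            Finset.prod_le_prod (fun i _ => hf0 _) (fun i hi => (key2 i hi).2)
        _ = _ := by rw [Finset.prod_const, Finset.card_range]
    calc (∏ j ∈ Finset.range n, f j) * ∏ j ∈ Finset.range n, f (n + j)
        ≤ (Real.exp (k₁ * L) * (1 + b)) ^ n * (1 + b) ^ n := by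
          apply mul_le_mul h1 h2 (Finset.prod_nonneg fun i _ => hf0 _) (by positivity)
      _ = Real.exp (↑n * k₁ * L) * (1 + b) ^ (2 * n) := by
          rw [hen₁, mul_pow, two_mul, pow_add]; ring
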